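/- Let M be a cancellative atomic monoid with atom set A, and let Δ ∈ M be such that L(Δ) := {x ∈ M : x ≤_L Δ} generates M as a monoid. Define R(Δ) := {x ∈ M : x ≤_R Δ}. Then the following four conditions are equivalent: (1) L(Δ) = R(Δ); (2) {aΔ : a ∈ A} = {Δa : a ∈ A}; (3) {wΔ : w ∈ M} = {Δw : w ∈ M}; (4) there exists a monoid automorphism τ : M → M such that wΔ = Δτ(w) for all w ∈ M. -/

import Mathlib

/-- Left divisibility in a monoid: `a ≤_L b`. -/
def leftDvd {M : Type*} [Monoid M] (a b : M) : Prop := ∃ c, a * c = b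

/-- Right divisibility in a monoid: `a ≤_R b`. -/
def rightDvd {M : Type*} [Monoid M] (a b : M) : Prop := ∃ c, c * a = b

/-- A monoid is atomic if it admits a norm `ν : M → ℕ`. -/
def IsAtomicMonoid (M : Type*) [Monoid M] : Prop :=
  ∃ ν : M → ℕ, (∀ a, ν a = 0 ↔ a = 1) ∧ ∀ a b, ν a + ν b ≤ ν (a * b)

/-- An atom of a monoid: a non-trivial indecomposable element. -/
def IsAtomElem {M : Type*} [Monoid M] (a : M) : Prop :=
  a ≠ 1 ∧ ∀ b c, a = b * c → b = 1 ∨ c = 1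

/-- In an atomic monoid, every element is a product of atoms. -/
lemma exists_atom_decomp {M : Type} [Monoid M] (hat : IsAtomicMonoid M) (a : M) :
    ∃ l : List M, (∀ x ∈ l, IsAtomElem x) ∧ l.prod = a := by
  obtain ⟨ν, h0, hadd⟩ := hat
  suffices h : ∀ n a, ν a ≤ n → ∃ l : List M, (∀ x ∈ l, IsAtomElem x) ∧ l.prod = a from
    h (ν a) a le_rfl
  intro n
  induction n with
  | zero =>
    intro a ha
    exact ⟨[], by simp, by simp [(h0 a).mp (Nat.le_zero.mp ha)]⟩
  | succ n ih =>
    intro a ha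
    by_cases h1 : a = 1
    · exact ⟨[], by simp, by simp [h1]⟩
    by_cases hatom : ∀ b c, a = b * c → b = 1 ∨ c = 1
    · exact ⟨[a], by simpa using ⟨h1, hatom⟩, by simp⟩
    push_neg at hatom
    obtain ⟨b, c, habc, hb, hc⟩ := hatom
    have hb1 : 1 ≤ ν b := Nat.one_le_iff_ne_zero.mpr (fun h => hb ((h0 b).mp h))
    have hc1 : 1 ≤ ν c := Nat.one_le_iff_ne_zero.mpr (fun h => hc ((h0 c).mp h))
    have hsum : ν b + ν c ≤ ν a := habc ▸ hadd b c
    obtain ⟨lb, hlb, hlbp⟩ := ih b (by omega)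
    obtain ⟨lc, hlc2, hlcp⟩ := ih c (by omega)
    refine ⟨lb ++ lc, ?_, by simp [hlbp, hlcp, habc]⟩
    intro x hx
    rcases List.mem_append.mp hx with h | h
    exacts [hlb x h, hlc2 x h]

theorem garside_element_tfae {M : Type} [Monoid M]
    (hlc : ∀ a b c : M, a * b = a * c → b = c)
    (hrc : ∀ a b c : M, b * a = c * a → b = c)
    (hat : IsAtomicMonoid M)
    (Δ : M) (hgen : Submonoid.closure {x : M | leftDvd x Δ} = ⊤) :
    List.TFAE [
      {x : M | leftDvd x Δ} = {x : M | rightDvd x Δ},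
      (fun a => a * Δ) '' {a : M | IsAtomElem a} = (fun a => Δ * a) '' {a : M | IsAtomElem a},
      (Set.range fun w : M => w * Δ) = (Set.range fun w : M => Δ * w),
      ∃ τ : M ≃* M, ∀ w : M, w * Δ = Δ * τ w ] := by
  tfae_have 1 → 3 := by
    intro h1
    -- submonoid of w with w*Δ ∈ Δ*M
    have hS : ∀ w : M, ∃ c, w * Δ = Δ * c := by
      intro w
      let S : Submonoid M :=
        { carrier := {w | ∃ c, w * Δ = Δ * c}
          one_mem' := ⟨1, by simp⟩
          mul_mem' := by
            rintro x y ⟨c, hc⟩ ⟨c', hc'⟩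
            exact ⟨c * c', by rw [mul_assoc, hc', ← mul_assoc, hc, mul_assoc]⟩ }
      have hsub : {x : M | leftDvd x Δ} ⊆ S := by
        rintro x ⟨y, hy⟩
        have hyR : x ∈ {x : M | rightDvd x Δ} := h1 ▸ Set.mem_setOf.mpr ⟨y, hy⟩
        -- y is a right divisor of Δ (x*y=Δ), so y ∈ R(Δ) = L(Δ): ∃ z, y*z = Δ
        have hyL : y ∈ {x : M | leftDvd x Δ} := by
          rw [h1]; exact ⟨x, hy⟩
        obtain ⟨z, hz⟩ := hyL
        refine ⟨z, ?_⟩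
        calc x * Δ = x * (y * z) := by rw [hz]
          _ = (x * y) * z := (mul_assoc x y z).symm
          _ = Δ * z := by rw [hy]
      have : w ∈ S := by
        have : w ∈ Submonoid.closure {x : M | leftDvd x Δ} := by
          rw [hgen]; exact Submonoid.mem_top w
        exact Submonoid.closure_le.mpr hsub this
      exact this
    have hT : ∀ w : M, ∃ c, Δ * w = c * Δ := by
      intro w
      let T : Submonoid M :=
        { carrier := {w | ∃ c, Δ * w = c * Δ}
          one_mem' := ⟨1, by simp⟩
          mul_mem' := by
            rintro x y ⟨c, hc⟩ ⟨c', hc'⟩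
            exact ⟨c * c', by rw [← mul_assoc, hc, mul_assoc, hc', ← mul_assoc]⟩ }
      have hsub : {x : M | leftDvd x Δ} ⊆ T := by
        rintro x hx
        have hxR : x ∈ {x : M | rightDvd x Δ} := h1 ▸ hx
        obtain ⟨u, hu⟩ := hxR
        have huL : u ∈ {x : M | leftDvd x Δ} := ⟨x, hu⟩
        have huR : u ∈ {x : M | rightDvd x Δ} := h1 ▸ huL
        obtain ⟨v, hv⟩ := huR
        refine ⟨v, ?_⟩
        calc Δ * x = (v * u) * x := by rw [hv]
          _ = v * (u * x) := mul_assoc v u x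
          _ = v * Δ := by rw [hu]
      have : w ∈ T := by
        have : w ∈ Submonoid.closure {x : M | leftDvd x Δ} := by
          rw [hgen]; exact Submonoid.mem_top w
        exact Submonoid.closure_le.mpr hsub this
      exact this
    ext z
    constructor
    · rintro ⟨w, rfl⟩
      obtain ⟨c, hc⟩ := hS w
      exact ⟨c, hc.symm⟩
    · rintro ⟨w, rfl⟩
      obtain ⟨c, hc⟩ := hT w
      exact ⟨c, hc.symm⟩
  tfae_have 3 → 2 := by
    intro h3
    have hS : ∀ w : M, ∃ c, w * Δ = Δ * c := by
      intro w
      have : w * Δ ∈ Set.range fun w : M => Δ * w := h3 ▸ ⟨w, rfl⟩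
      obtain ⟨c, hc⟩ := this
      exact ⟨c, hc.symm⟩
    have hT : ∀ w : M, ∃ c, Δ * w = c * Δ := by
      intro w
      have : Δ * w ∈ Set.range fun w : M => w * Δ := h3.symm ▸ ⟨w, rfl⟩
      obtain ⟨c, hc⟩ := this
      exact ⟨c, hc.symm⟩
    ext z
    constructor
    · rintro ⟨a, ha, rfl⟩
      obtain ⟨w, hw⟩ := hS a
      refine ⟨w, ?_, hw.symm⟩
      constructor
      · rintro rfl
        have : a * Δ = 1 * Δ := by rw [hw]; simp
        exact ha.1 (hrc Δ a 1 this)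
        
      · rintro b c rfl
        obtain ⟨u, hu⟩ := hT b
        obtain ⟨v, hv⟩ := hT c
        have : a * Δ = (u * v) * Δ := by
          calc a * Δ = Δ * (b * c) := hw
            _ = (Δ * b) * c := (mul_assoc Δ b c).symm
            _ = (u * Δ) * c := by rw [hu]
            _ = u * (Δ * c) := mul_assoc u Δ c
            _ = u * (v * Δ) := by rw [hv]
            _ = (u * v) * Δ := (mul_assoc u v Δ).symm
        have hauv : a = u * v := hrc Δ a (u * v) this
        rcases ha.2 u v hauv with h | h
        · left
          subst h
          rw [one_mul] at hu
          exact hlc Δ b 1 (by rw [hu]; simp)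
        · right
          subst h
          rw [one_mul] at hv
          exact hlc Δ c 1 (by rw [hv]; simp)
    · rintro ⟨a, ha, rfl⟩
      obtain ⟨w, hw⟩ := hT a
      refine ⟨w, ?_, hw.symm⟩
      constructor
      · rintro rfl
        have : Δ * a = Δ * 1 := by rw [hw]; simp
        exact ha.1 (hlc Δ a 1 this)
      · rintro b c rfl
        obtain ⟨u, hu⟩ := hS b
        obtain ⟨v, hv⟩ := hS c
        have : Δ * a = Δ * (u * v) := by
          calc Δ * a = (b * c) * Δ := hw
            _ = b * (c * Δ) := mul_assoc b c Δ
            _ = b * (Δ * v) := by rw [hv]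
            _ = (b * Δ) * v := (mul_assoc b Δ v).symm
            _ = (Δ * u) * v := by rw [hu]
            _ = Δ * (u * v) := mul_assoc Δ u v
        have hauv : a = u * v := hlc Δ a (u * v) this
        rcases ha.2 u v hauv with h | h
        · left
          subst h
          rw [mul_one] at hu
          exact hrc Δ b 1 (by rw [hu]; simp)
        · right
          subst h
          rw [mul_one] at hv
          exact hrc Δ c 1 (by rw [hv]; simp)
  tfae_have 2 → 3 := by
    intro h2
    have hA : ∀ a : M, IsAtomElem a → ∃ a', a * Δ = Δ * a' := by
      intro a ha
      have : a * Δ ∈ (fun a => Δ * a) '' {a : M | IsAtomElem a} := h2 ▸ ⟨a, ha, rfl⟩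
      obtain ⟨a', _, ha'⟩ := this
      exact ⟨a', ha'.symm⟩
    have hA' : ∀ a : M, IsAtomElem a → ∃ a', Δ * a = a' * Δ := by
      intro a ha
      have : Δ * a ∈ (fun a => a * Δ) '' {a : M | IsAtomElem a} := h2.symm ▸ ⟨a, ha, rfl⟩
      obtain ⟨a', _, ha'⟩ := this
      exact ⟨a', ha'.symm⟩
    have hlist : ∀ l : List M, (∀ x ∈ l, IsAtomElem x) → ∃ w, l.prod * Δ = Δ * w := by
      intro l
      induction l with
      | nil => intro _; exact ⟨1, by simp⟩
      | cons a l ih =>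
        intro hl
        obtain ⟨w, hw⟩ := ih (fun x hx => hl x (List.mem_cons_of_mem a hx))
        obtain ⟨a', ha'⟩ := hA a (hl a (List.mem_cons_self (a := a) (l := l)))
        exact ⟨a' * w, by rw [List.prod_cons, mul_assoc, hw, ← mul_assoc, ha', mul_assoc]⟩
    have hlist' : ∀ l : List M, (∀ x ∈ l, IsAtomElem x) → ∃ w, Δ * l.prod = w * Δ := by
      intro l
      induction l with
      | nil => intro _; exact ⟨1, by simp⟩
      | cons a l ih =>
        intro hl
        obtain ⟨w, hw⟩ := ih (fun x hx => hl x (List.mem_cons_of_mem a hx))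
        obtain ⟨a', ha'⟩ := hA' a (hl a (List.mem_cons_self (a := a) (l := l)))
        exact ⟨a' * w, by rw [List.prod_cons, ← mul_assoc, ha', mul_assoc, hw, ← mul_assoc]⟩
    ext z
    constructor
    · rintro ⟨v, rfl⟩
      obtain ⟨l, hl, hlp⟩ := exists_atom_decomp hat v
      obtain ⟨w, hw⟩ := hlist l hl
      refine ⟨w, ?_⟩
      show Δ * w = v * Δ
      rw [← hlp, ← hw]
    · rintro ⟨v, rfl⟩
      obtain ⟨l, hl, hlp⟩ := exists_atom_decomp hat v
      obtain ⟨w, hw⟩ := hlist' l hl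
      refine ⟨w, ?_⟩
      show w * Δ = Δ * v
      rw [← hlp, ← hw]
  tfae_have 3 → 4 := by
    intro h3
    have hS : ∀ w : M, ∃ c, w * Δ = Δ * c := by
      intro w
      have : w * Δ ∈ Set.range fun w : M => Δ * w := h3 ▸ ⟨w, rfl⟩
      obtain ⟨c, hc⟩ := this
      exact ⟨c, hc.symm⟩
    have hT : ∀ w : M, ∃ c, Δ * w = c * Δ := by
      intro w
      have : Δ * w ∈ Set.range fun w : M => w * Δ := h3.symm ▸ ⟨w, rfl⟩
      obtain ⟨c, hc⟩ := this
      exact ⟨c, hc.symm⟩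
    choose f hf using hS
    choose g hg using hT
    refine ⟨⟨⟨f, g, ?_, ?_⟩, ?_⟩, fun w => hf w⟩
    · intro w
      apply hrc Δ
      rw [← hg (f w), ← hf w]
    · intro w
      apply hlc Δ
      rw [← hf (g w), ← hg w]
    · intro v w
      show f (v * w) = f v * f w
      apply hlc Δ
      calc Δ * f (v * w) = (v * w) * Δ := (hf (v * w)).symm
        _ = v * (w * Δ) := mul_assoc v w Δ
        _ = v * (Δ * f w) := by rw [hf w]
        _ = (v * Δ) * f w := (mul_assoc v Δ (f w)).symm
        _ = (Δ * f v) * f w := by rw [hf v]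
        _ = Δ * (f v * f w) := mul_assoc Δ (f v) (f w)
  tfae_have 4 → 1 := by
    rintro ⟨τ, hτ⟩
    have key : ∀ u v : M, u * v = Δ → v * τ u = Δ := by
      intro u v huv
      apply hlc u
      calc u * (v * τ u) = (u * v) * τ u := (mul_assoc u v (τ u)).symm
        _ = Δ * τ u := by rw [huv]
        _ = u * Δ := (hτ u).symm
    have key' : ∀ u v : M, u * v = Δ → τ.symm v * u = Δ := by
      intro u v huv
      apply hrc v
      have h1 : τ.symm v * Δ = Δ * v := by
        rw [hτ (τ.symm v), MulEquiv.apply_symm_apply]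
      calc (τ.symm v * u) * v = τ.symm v * (u * v) := mul_assoc _ u v
        _ = τ.symm v * Δ := by rw [huv]
        _ = Δ * v := h1
    ext x
    constructor
    · rintro ⟨y, hy⟩
      exact ⟨τ.symm y, key' x y hy⟩
    · rintro ⟨c, hc⟩
      exact ⟨τ c, key c x hc⟩
  tfae_finish
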